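/- The set Q = {K_α : α ∈ {0,1}^∞} is a self-similar subset of the hyperspace C(ℝ^3): Q = T̃_0(Q) ∪ T̃_1(Q), where T̃_i : C(ℝ^3) → C(ℝ^3) is the map A ↦ (A + D_i)/5, and T̃_0, T̃_1 restricted to Q are injective contractions with Lipschitz constant 1/5. -/

import Mathlib

open Pointwise

noncomputable section

/-- `ℝ^k` with the Euclidean metric. -/
abbrev E (k : ℕ) := EuclideanSpace ℝ (Fin k)

/-- Points of `ℝ^k` all of whose coordinates are integers in `{0, …, n-1}`. -/
def digits (n k : ℕ) : Set (E k) := {x | ∀ i, ∃ m : ℕ, m < n ∧ x i = m}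

/-- The unit cube `[0,1]^k`. -/
def unitCube (k : ℕ) : Set (E k) := {x | ∀ i, x i ∈ Set.Icc (0:ℝ) 1}

/-- The Hutchinson operator `A ↦ (A + D b)/5` on subsets of `ℝ³`,
for a pair of digit sets `D false = D₀`, `D true = D₁`. -/
def Ttil (D : Bool → Set (E 3)) (b : Bool) (A : Set (E 3)) : Set (E 3) :=
  (5:ℝ)⁻¹ • (A + D b)

/-- `F_w = T_{w₁} ∘ … ∘ T_{w_k} ([0,1]³)` for a finite binary word `w`. -/
def Fword (D : Bool → Set (E 3)) (w : List Bool) : Set (E 3) :=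
  w.foldr (fun b A => Ttil D b A) (unitCube 3)

/-- Length of the longest common prefix of two words. -/
def lcp : List Bool → List Bool → ℕ
  | a :: as, b :: bs => if a = b then lcp as bs + 1 else 0
  | _, _ => 0

/-- The length-`k` initial segment of an infinite binary sequence. -/
def prefixList (α : ℕ → Bool) (k : ℕ) : List Bool := List.ofFn (fun i : Fin k => α i)

/-- `K_α = ⋂_{k≥1} T_{α₁} ∘ … ∘ T_{α_k}([0,1]³)`. -/
def Kset (D : Bool → Set (E 3)) (α : ℕ → Bool) : Set (E 3) :=
  ⋂ k : ℕ, Fword D (prefixList α (k + 1))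

/-! ### Auxiliary material -/

/-- Prepend one letter to an infinite binary sequence. -/
def consSeq (b : Bool) (α : ℕ → Bool) : ℕ → Bool
  | 0 => b
  | n + 1 => α n

lemma consSeq_tail (α : ℕ → Bool) : consSeq (α 0) (fun n => α (n + 1)) = α := by
  funext n; cases n <;> rfl

lemma Ttil_mono (D : Bool → Set (E 3)) (b : Bool) : Monotone (Ttil D b) := by
  intro A B h
  exact Set.smul_set_mono (Set.add_subset_add h subset_rfl)

lemma mem_Ttil {D : Bool → Set (E 3)} {b : Bool} {A : Set (E 3)} {x : E 3} :
    x ∈ Ttil D b A ↔ ∃ a ∈ A, ∃ d ∈ D b, x = (5:ℝ)⁻¹ • (a + d) := by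
  constructor
  · rintro ⟨y, hy, rfl⟩
    rcases Set.mem_add.mp hy with ⟨a, ha, d, hd, rfl⟩
    exact ⟨a, ha, d, hd, rfl⟩
  · rintro ⟨a, ha, d, hd, rfl⟩
    exact ⟨a + d, Set.add_mem_add ha hd, rfl⟩

lemma Ttil_cube_subset (D : Bool → Set (E 3)) (hsub : ∀ b, D b ⊆ digits 5 3) (b : Bool) :
    Ttil D b (unitCube 3) ⊆ unitCube 3 := by
  intro x hx
  rcases mem_Ttil.mp hx with ⟨a, ha, d, hd, rfl⟩
  intro i
  rcases hsub b hd i with ⟨m, hm, hdi⟩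
  have h1 := (ha i).1
  have h2 := (ha i).2
  have h5 : ((5:ℝ)⁻¹ • (a + d)) i = (5:ℝ)⁻¹ * (a i + d i) := by simp [mul_add]
  constructor
  · rw [h5, hdi]
    positivity
  · rw [h5, hdi]
    have : (m : ℝ) ≤ 4 := by exact_mod_cast Nat.lt_succ_iff.mp hm
    nlinarith

lemma Fword_cons (D : Bool → Set (E 3)) (b : Bool) (w : List Bool) :
    Fword D (b :: w) = Ttil D b (Fword D w) := rfl

lemma Fword_concat_subset (D : Bool → Set (E 3)) (hsub : ∀ b, D b ⊆ digits 5 3)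
    (w : List Bool) (b : Bool) : Fword D (w ++ [b]) ⊆ Fword D w := by
  induction w with
  | nil => exact Ttil_cube_subset D hsub b
  | cons a w ih => exact Ttil_mono D a ih

lemma prefixList_succ' (α : ℕ → Bool) (k : ℕ) :
    prefixList α (k + 1) = prefixList α k ++ [α k] := by
  unfold prefixList
  rw [List.ofFn_succ', List.concat_eq_append]
  simp

lemma prefixList_cons (b : Bool) (α : ℕ → Bool) (k : ℕ) :
    prefixList (consSeq b α) (k + 1) = b :: prefixList α k := by
  unfold prefixList
  rw [List.ofFn_succ]
  rfl

lemma Fword_prefix_antitone (D : Bool → Set (E 3)) (hsub : ∀ b, D b ⊆ digits 5 3)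
    (α : ℕ → Bool) : Antitone (fun k => Fword D (prefixList α (k + 1))) := by
  apply antitone_nat_of_succ_le
  intro k
  rw [prefixList_succ' α (k + 1)]
  exact Fword_concat_subset D hsub _ _

lemma add_iInter_eq {S : ℕ → Set (E 3)} (hS : Antitone S) {T : Set (E 3)} (hT : T.Finite) :
    (⋂ k, S k) + T = ⋂ k, S k + T := by
  apply Set.Subset.antisymm
  · exact Set.subset_iInter fun k => Set.add_subset_add (Set.iInter_subset S k) subset_rfl
  · intro x hx
    simp only [Set.mem_iInter] at hx
    have h : ∀ k, ∃ d : T, x - (d : E 3) ∈ S k := by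
      intro k
      rcases Set.mem_add.mp (hx k) with ⟨s, hs, d, hd, hsd⟩
      exact ⟨⟨d, hd⟩, by rw [← hsd]; simpa using hs⟩
    choose f hf using h
    haveI : Finite T := hT.to_subtype
    obtain ⟨d, hd⟩ := Finite.exists_infinite_fiber f
    have hinf : (f ⁻¹' {d} : Set ℕ).Infinite := (Set.infinite_coe_iff (s := f ⁻¹' {d})).mp hd
    have hmem : x - (d : E 3) ∈ ⋂ k, S k := by
      apply Set.mem_iInter.mpr
      intro k
      obtain ⟨k', hk', hlt⟩ := hinf.exists_gt k
      have hk'd : f k' = d := hk'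
      have : x - (d : E 3) ∈ S k' := hk'd ▸ hf k'
      exact hS hlt.le this
    have := Set.add_mem_add hmem d.2
    simpa using this

lemma smul_iInter₀ {ι : Sort*} {c : ℝ} (hc : c ≠ 0) (S : ι → Set (E 3)) :
    c • ⋂ i, S i = ⋂ i, c • S i := by
  ext x
  simp [Set.mem_smul_set_iff_inv_smul_mem₀ hc, Set.mem_iInter]

lemma Ttil_iInter (D : Bool → Set (E 3)) (hfin : ∀ b, (D b).Finite)
    {S : ℕ → Set (E 3)} (hS : Antitone S) (b : Bool) :
    Ttil D b (⋂ k, S k) = ⋂ k, Ttil D b (S k) := by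
  unfold Ttil
  rw [add_iInter_eq hS (hfin b), smul_iInter₀ (by norm_num : (5:ℝ)⁻¹ ≠ 0)]

lemma iInter_succ_eq {X : Type*} {S : ℕ → Set X} (hS : Antitone S) :
    ⋂ k, S (k + 1) = ⋂ k, S k := by
  apply Set.Subset.antisymm
  · exact Set.subset_iInter fun k => (Set.iInter_subset (fun k => S (k + 1)) k).trans (hS k.le_succ)
  · exact Set.subset_iInter fun k => Set.iInter_subset S (k + 1)

lemma Ttil_Kset (D : Bool → Set (E 3)) (hfin : ∀ b, (D b).Finite)
    (hsub : ∀ b, D b ⊆ digits 5 3) (b : Bool) (α : ℕ → Bool) :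
    Ttil D b (Kset D α) = Kset D (consSeq b α) := by
  unfold Kset
  rw [Ttil_iInter D hfin (Fword_prefix_antitone D hsub α) b]
  have h1 : ∀ k, Ttil D b (Fword D (prefixList α (k + 1)))
      = Fword D (prefixList (consSeq b α) (k + 2)) := by
    intro k
    rw [prefixList_cons b α (k + 1), Fword_cons]
  calc ⋂ k, Ttil D b (Fword D (prefixList α (k + 1)))
      = ⋂ k, Fword D (prefixList (consSeq b α) (k + 1 + 1)) := by
        apply Set.iInter_congr; intro k; exact h1 k
    _ = ⋂ k, Fword D (prefixList (consSeq b α) (k + 1)) :=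
        iInter_succ_eq (fun j j' h => Fword_prefix_antitone D hsub (consSeq b α) h)

lemma Kset_subset_cube (D : Bool → Set (E 3)) (hsub : ∀ b, D b ⊆ digits 5 3) (α : ℕ → Bool) :
    Kset D α ⊆ unitCube 3 := by
  refine (Set.iInter_subset _ 0).trans ?_
  have : prefixList α 1 = [α 0] := by
    simp [prefixList, List.ofFn_succ]
  rw [this]
  exact Ttil_cube_subset D hsub (α 0)

/-! ### Cancellation of Minkowski sums with integer digit sets -/

lemma cancel_subset {T : Set (E 3)} (hTfin : T.Finite) (hTne : T.Nonempty)
    (hTsub : T ⊆ digits 5 3) {A B : Set (E 3)} (hA : A ⊆ unitCube 3) (hB : B ⊆ unitCube 3)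
    (h : A + T = B + T) : A ⊆ B := by
  intro x hx
  set w : Fin 3 → ℝ := fun i => if x i = 1 then 1 else if x i = 0 then -1 else 0 with hw
  obtain ⟨d, hdmem, hmax⟩ := hTfin.toFinset.exists_max_image (fun v => ∑ i, w i * v i)
    (by rwa [Set.Finite.toFinset_nonempty])
  rw [Set.Finite.mem_toFinset] at hdmem
  have hxd : x + d ∈ B + T := h ▸ Set.add_mem_add hx hdmem
  rcases Set.mem_add.mp hxd with ⟨y, hy, d', hd', he⟩
  -- he : y + d' = x + d
  have hcoord : ∀ i, y i + d' i = x i + d i := by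
    intro i
    have := congrArg (fun v : E 3 => v i) he
    simpa using this
  have key : ∀ i, 0 ≤ w i * (d' i - d i) ∧ (w i * (d' i - d i) = 0 → x i = y i) := by
    intro i
    rcases hTsub hdmem i with ⟨m, _, hmi⟩
    rcases hTsub hd' i with ⟨m', _, hmi'⟩
    have hx1 := (hA hx i).1
    have hx2 := (hA hx i).2
    have hy1 := (hB hy i).1
    have hy2 := (hB hy i).2
    have heq : y i + (m' : ℝ) = x i + (m : ℝ) := by rw [← hmi, ← hmi']; exact hcoord i
    rcases lt_trichotomy m m' with hc | hc | hc
    · -- m < m' : x i = 1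
      have h1 : (m : ℝ) + 1 ≤ m' := by exact_mod_cast hc
      have hxi : x i = 1 := by linarith
      have hwi : w i = 1 := by rw [hw]; simp [hxi]
      rw [hwi, hmi, hmi']
      constructor
      · linarith
      · intro habs; exfalso; linarith
    · subst hc
      rw [hmi, hmi']
      constructor
      · simp
      · intro _; linarith
    · -- m' < m : x i = 0
      have h1 : (m' : ℝ) + 1 ≤ m := by exact_mod_cast hc
      have hxi : x i = 0 := by linarith
      have hwi : w i = -1 := by
        rw [hw]
        have : x i ≠ 1 := by rw [hxi]; norm_num
        simp [this, hxi]
      rw [hwi, hmi, hmi']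
      constructor
      · linarith
      · intro habs; exfalso; linarith
  have hsum : ∑ i, w i * d' i ≤ ∑ i, w i * d i :=
    hmax d' (Set.Finite.mem_toFinset _ |>.mpr hd')
  have hsum0 : ∑ i, w i * (d' i - d i) = 0 := by
    have hle : ∑ i, w i * (d' i - d i) ≤ 0 := by
      have : ∑ i, w i * (d' i - d i) = ∑ i, w i * d' i - ∑ i, w i * d i := by
        rw [← Finset.sum_sub_distrib]
        apply Finset.sum_congr rfl
        intros; ring
      linarith
    have hge : 0 ≤ ∑ i, w i * (d' i - d i) :=
      Finset.sum_nonneg fun i _ => (key i).1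
    linarith
  have hall : ∀ i ∈ Finset.univ, w i * (d' i - d i) = 0 :=
    (Finset.sum_eq_zero_iff_of_nonneg fun i _ => (key i).1).mp hsum0
  have hxy : x = y := by
    ext i
    exact (key i).2 (hall i (Finset.mem_univ i))
  rwa [hxy]

/-! ### The Lipschitz estimate -/

lemma cube_bounded : Bornology.IsBounded (unitCube 3) := by
  apply (Metric.isBounded_iff_subset_closedBall 0).mpr
  refine ⟨3, fun x hx => ?_⟩
  have : dist x 0 ≤ 3 := by
    rw [EuclideanSpace.dist_eq]
    have hb : ∀ i : Fin 3, dist (x i) ((0 : E 3) i) ^ 2 ≤ 1 := by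
      intro i
      have h1 := (hx i).1
      have h2 := (hx i).2
      have h0 : (0 : E 3) i = 0 := rfl
      rw [h0, Real.dist_eq, sq_abs]
      nlinarith
    have hsum : ∑ i : Fin 3, dist (x i) ((0 : E 3) i) ^ 2 ≤ 3 := by
      calc ∑ i : Fin 3, dist (x i) ((0 : E 3) i) ^ 2 ≤ ∑ _i : Fin 3, (1:ℝ) :=
            Finset.sum_le_sum fun i _ => hb i
        _ = 3 := by simp
    calc Real.sqrt (∑ i : Fin 3, dist (x i) ((0 : E 3) i) ^ 2) ≤ Real.sqrt (3 ^ 2) := by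
          apply Real.sqrt_le_sqrt; nlinarith
      _ = 3 := Real.sqrt_sq (by norm_num)
  exact this

lemma Ttil_empty (D : Bool → Set (E 3)) (b : Bool) : Ttil D b ∅ = ∅ := by
  simp [Ttil]

lemma hausdorffEdist_Ttil_le (D : Bool → Set (E 3)) (b : Bool) {A B : Set (E 3)}
    (hAne : A.Nonempty) (hBne : B.Nonempty) (hfinE : EMetric.hausdorffEdist A B ≠ ⊤) :
    EMetric.hausdorffEdist (Ttil D b A) (Ttil D b B)
      ≤ (5:ENNReal)⁻¹ * EMetric.hausdorffEdist A B := by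
  set H := EMetric.hausdorffEdist A B with hH
  apply ENNReal.le_of_forall_pos_le_add
  intro ε hε _
  have h5 : ((5:ENNReal) : ENNReal) * (ε : ENNReal) ≠ 0 := by
    simp [hε.ne']
  have key : ∀ (X Y : Set (E 3)), EMetric.hausdorffEdist X Y = H →
      ∀ x ∈ Ttil D b X, ∃ y ∈ Ttil D b Y, edist x y ≤ 5⁻¹ * H + ε := by
    intro X Y hXY x hx
    rcases mem_Ttil.mp hx with ⟨a, ha, d, hd, rfl⟩
    have hinf : EMetric.infEdist a Y ≤ H := hXY ▸ EMetric.infEdist_le_hausdorffEdist_of_mem ha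
    have hlt : EMetric.infEdist a Y < H + 5 * ε := by
      apply lt_of_le_of_lt hinf
      apply ENNReal.lt_add_right (hH ▸ hfinE)
      simp [hε.ne']
    rcases EMetric.infEdist_lt_iff.mp hlt with ⟨c, hc, hac⟩
    refine ⟨(5:ℝ)⁻¹ • (c + d), mem_Ttil.mpr ⟨c, hc, d, hd, rfl⟩, ?_⟩
    have hed : edist ((5:ℝ)⁻¹ • (a + d)) ((5:ℝ)⁻¹ • (c + d))
        = (5:ENNReal)⁻¹ * edist a c := by
      rw [edist_smul₀]
      have h1 : edist (a + d) (c + d) = edist a c := edist_add_right a c d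
      rw [h1, ENNReal.smul_def, smul_eq_mul]
      congr 1
      norm_num
    rw [hed]
    calc (5:ENNReal)⁻¹ * edist a c ≤ (5:ENNReal)⁻¹ * (H + 5 * ε) := by
          exact mul_le_mul_right hac.le _
      _ = 5⁻¹ * H + 5⁻¹ * (5 * ε) := by rw [mul_add]
      _ = 5⁻¹ * H + ε := by
          congr 1
          rw [← mul_assoc, ENNReal.inv_mul_cancel (by norm_num) (by norm_num), one_mul]
  have hsym : EMetric.hausdorffEdist B A = H := by
    rw [hH]; exact EMetric.hausdorffEdist_comm
  exact EMetric.hausdorffEdist_le_of_mem_edist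
    (key A B hH.symm) (key B A hsym)

lemma hausdorffDist_Ttil_le (D : Bool → Set (E 3)) (b : Bool) {A B : Set (E 3)}
    (hA : A ⊆ unitCube 3) (hB : B ⊆ unitCube 3) :
    Metric.hausdorffDist (Ttil D b A) (Ttil D b B)
      ≤ (5:ℝ)⁻¹ * Metric.hausdorffDist A B := by
  rcases A.eq_empty_or_nonempty with rfl | hAne
  · rw [Ttil_empty]
    rw [Metric.hausdorffDist_empty']
    have := Metric.hausdorffDist_nonneg (s := (∅ : Set (E 3))) (t := B)
    positivity
  rcases B.eq_empty_or_nonempty with rfl | hBne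
  · rw [Ttil_empty]
    rw [Metric.hausdorffDist_empty]
    have := Metric.hausdorffDist_nonneg (s := A) (t := (∅ : Set (E 3)))
    positivity
  have hfinE : EMetric.hausdorffEdist A B ≠ ⊤ :=
    Metric.hausdorffEdist_ne_top_of_nonempty_of_bounded hAne hBne
      (cube_bounded.subset hA) (cube_bounded.subset hB)
  have h := hausdorffEdist_Ttil_le D b hAne hBne hfinE
  have hne : (5:ENNReal)⁻¹ * EMetric.hausdorffEdist A B ≠ ⊤ :=
    ENNReal.mul_ne_top (by norm_num) hfinE
  calc Metric.hausdorffDist (Ttil D b A) (Ttil D b B)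
      = (EMetric.hausdorffEdist (Ttil D b A) (Ttil D b B)).toReal := rfl
    _ ≤ ((5:ENNReal)⁻¹ * EMetric.hausdorffEdist A B).toReal := ENNReal.toReal_mono hne h
    _ = (5:ℝ)⁻¹ * Metric.hausdorffDist A B := by
        rw [ENNReal.toReal_mul]
        congr 1
        simp [ENNReal.toReal_inv]

/-! ### Main theorem -/

/-- `Q = {K_α}` is a self-similar subset of the hyperspace:
`Q = T̃₀(Q) ∪ T̃₁(Q)`, and `T̃₀, T̃₁` restricted to `Q` are injective contractions with
Lipschitz constant `1/5` for the Hausdorff distance. -/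
theorem Q_self_similar (D : Bool → Set (E 3))
    (hfin : ∀ b, (D b).Finite) (hne : ∀ b, (D b).Nonempty)
    (hsub : ∀ b, D b ⊆ digits 5 3) (hdisj : Disjoint (D false) (D true))
    (hsep : ∀ x ∈ D false + unitCube 3, ∀ y ∈ D true + unitCube 3, 1 ≤ dist x y) :
    Set.range (Kset D) =
        Ttil D false '' Set.range (Kset D) ∪ Ttil D true '' Set.range (Kset D) ∧
      (∀ b : Bool, Set.InjOn (Ttil D b) (Set.range (Kset D))) ∧
      (∀ b : Bool, ∀ A ∈ Set.range (Kset D), ∀ B ∈ Set.range (Kset D),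
        Metric.hausdorffDist (Ttil D b A) (Ttil D b B) ≤
          (5:ℝ)⁻¹ * Metric.hausdorffDist A B) := by
  refine ⟨?_, ?_, ?_⟩
  · apply Set.Subset.antisymm
    · rintro _ ⟨α, rfl⟩
      have hdec : Kset D α = Ttil D (α 0) (Kset D (fun n => α (n + 1))) := by
        rw [Ttil_Kset D hfin hsub, consSeq_tail]
      cases h0 : α 0 with
      | false =>
        exact Or.inl ⟨Kset D (fun n => α (n + 1)), Set.mem_range_self _, by rw [hdec, h0]⟩
      | true =>
        exact Or.inr ⟨Kset D (fun n => α (n + 1)), Set.mem_range_self _, by rw [hdec, h0]⟩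
    · rintro A (⟨_, ⟨α, rfl⟩, rfl⟩ | ⟨_, ⟨α, rfl⟩, rfl⟩) <;>
        rw [Ttil_Kset D hfin hsub] <;> exact Set.mem_range_self _
  · intro b A hA B hB h
    obtain ⟨α, rfl⟩ := hA
    obtain ⟨β, rfl⟩ := hB
    have hAc := Kset_subset_cube D hsub α
    have hBc := Kset_subset_cube D hsub β
    have hsum : Kset D α + D b = Kset D β + D b := by
      have hinj : Function.Injective (fun v : E 3 => (5:ℝ)⁻¹ • v) :=
        smul_right_injective (E 3) (by norm_num)
      have := h
      unfold Ttil at this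
      have himg := Set.image_injective.mpr hinj
      rw [← Set.image_smul, ← Set.image_smul] at this
      exact himg this
    exact Set.Subset.antisymm
      (cancel_subset (hfin b) (hne b) (hsub b) hAc hBc hsum)
      (cancel_subset (hfin b) (hne b) (hsub b) hBc hAc hsum.symm)
  · intro b A hA B hB
    obtain ⟨α, rfl⟩ := hA
    obtain ⟨β, rfl⟩ := hB
    exact hausdorffDist_Ttil_le D b (Kset_subset_cube D hsub α) (Kset_subset_cube D hsub β)
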